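/- Let K₀(x) = ∫_0^{+∞} e^{-x cosh v} dv for x > 0. Then: (a) for every x ∈ (0,1], K₀(x) ≥ -(ln x)/e + 1/(2e); (b) for every x ≥ 1, K₀(x) ≥ e^{-x}/(2x); (c) for every x ∈ (0,2], K₀(x) ≤ -ln(x/2) + 1/e; (d) for every x ≥ 2, K₀(x) ≤ (2/x) e^{-x/2}. -/

import Mathlib

open MeasureTheory Set Filter Topology

/-- The modified Bessel function of the second kind of order zero, via its
integral representation `K₀(x) = ∫_0^∞ e^{-x cosh v} dv`. -/
noncomputable def besselK0 (x : ℝ) : ℝ := ∫ v in Ioi (0 : ℝ), Real.exp (-(x * Real.cosh v))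



lemma cosh_le_exp_self {v : ℝ} (hv : 0 ≤ v) : Real.cosh v ≤ Real.exp v := by
  rw [Real.cosh_eq]
  nlinarith [Real.exp_le_exp.2 (neg_le_self hv), Real.exp_pos v]

lemma half_exp_le_cosh (v : ℝ) : Real.exp v / 2 ≤ Real.cosh v := by
  rw [Real.cosh_eq]
  nlinarith [Real.exp_pos (-v)]

lemma self_le_cosh {v : ℝ} (hv : 0 ≤ v) : v ≤ Real.cosh v := by
  rcases eq_or_lt_of_le hv with h | h
  · simp [← h, Real.cosh_zero]
  · exact le_of_lt ((Real.self_lt_sinh_iff.2 h).trans (Real.sinh_lt_cosh v))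

lemma besselIntegrable {x : ℝ} (hx : 0 < x) :
    IntegrableOn (fun v => Real.exp (-(x * Real.cosh v))) (Ioi 0) := by
  refine Integrable.mono' (exp_neg_integrableOn_Ioi 0 hx) ?_ ?_
  · exact (Real.continuous_exp.comp
      ((continuous_const.mul Real.continuous_cosh).neg)).aestronglyMeasurable
  · filter_upwards [ae_restrict_mem measurableSet_Ioi] with v hv
    rw [Real.norm_eq_abs, abs_of_pos (Real.exp_pos _), neg_mul]
    exact Real.exp_le_exp.2
      (neg_le_neg (mul_le_mul_of_nonneg_left (self_le_cosh hv.le) hx.le))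

lemma keyDeriv {b : ℝ} (hb : 0 < b) (v : ℝ) :
    HasDerivAt (fun v => -Real.exp (-(b * Real.exp v)) / b)
      (Real.exp v * Real.exp (-(b * Real.exp v))) v := by
  have h1 : HasDerivAt (fun v : ℝ => -(b * Real.exp v)) (-(b * Real.exp v)) v := by
    exact ((Real.hasDerivAt_exp v).const_mul b).neg
  have h3 : HasDerivAt (fun v => -Real.exp (-(b * Real.exp v)) / b)
      (-(Real.exp (-(b * Real.exp v)) * -(b * Real.exp v)) / b) v := (h1.exp.neg).div_const b
  convert h3 using 1
  field_simp

lemma keyTendsto {b : ℝ} (hb : 0 < b) :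
    Tendsto (fun v => -Real.exp (-(b * Real.exp v)) / b) atTop (𝓝 0) := by
  have h1 : Tendsto (fun v : ℝ => -(b * Real.exp v)) atTop atBot :=
    tendsto_neg_atBot_iff.2 (Real.tendsto_exp_atTop.const_mul_atTop hb)
  have h2 : Tendsto (fun v => -Real.exp (-(b * Real.exp v)) / b) atTop (𝓝 (-0 / b)) :=
    ((Real.tendsto_exp_atBot.comp h1).neg).div_const b
  simpa using h2

lemma keyIntegrable {b : ℝ} (hb : 0 < b) (c : ℝ) :
    IntegrableOn (fun v => Real.exp v * Real.exp (-(b * Real.exp v))) (Ioi c) :=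
  integrableOn_Ioi_deriv_of_nonneg' (fun v _ => keyDeriv hb v)
    (fun v _ => by positivity) (keyTendsto hb)

lemma keyIntegral {b : ℝ} (hb : 0 < b) (c : ℝ) :
    ∫ v in Ioi c, Real.exp v * Real.exp (-(b * Real.exp v))
      = Real.exp (-(b * Real.exp c)) / b := by
  rw [integral_Ioi_of_hasDerivAt_of_nonneg' (fun v _ => keyDeriv hb v)
    (fun v _ => by positivity) (keyTendsto hb)]
  ring

lemma linDeriv {b : ℝ} (hb : 0 < b) (v : ℝ) :
    HasDerivAt (fun v => -Real.exp (-(b * v)) / b) (Real.exp (-(b * v))) v := by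
  have h1 : HasDerivAt (fun v : ℝ => -(b * v)) (-b) v := by
    have := ((hasDerivAt_id v).const_mul b).neg
    simp only [mul_one] at this
    exact this
  have h3 : HasDerivAt (fun v => -Real.exp (-(b * v)) / b)
      (-(Real.exp (-(b * v)) * -b) / b) v := (h1.exp.neg).div_const b
  convert h3 using 1
  field_simp

lemma linTendsto {b : ℝ} (hb : 0 < b) :
    Tendsto (fun v => -Real.exp (-(b * v)) / b) atTop (𝓝 0) := by
  have h1 : Tendsto (fun v : ℝ => -(b * v)) atTop atBot :=
    tendsto_neg_atBot_iff.2 (tendsto_id.const_mul_atTop hb)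
  have h2 : Tendsto (fun v => -Real.exp (-(b * v)) / b) atTop (𝓝 (-0 / b)) :=
    ((Real.tendsto_exp_atBot.comp h1).neg).div_const b
  simpa using h2

lemma linIntegrable {b : ℝ} (hb : 0 < b) (c : ℝ) :
    IntegrableOn (fun v => Real.exp (-(b * v))) (Ioi c) :=
  integrableOn_Ioi_deriv_of_nonneg' (fun v _ => linDeriv hb v)
    (fun v _ => by positivity) (linTendsto hb)

lemma linIntegral {b : ℝ} (hb : 0 < b) (c : ℝ) :
    ∫ v in Ioi c, Real.exp (-(b * v)) = Real.exp (-(b * c)) / b := by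
  rw [integral_Ioi_of_hasDerivAt_of_nonneg' (fun v _ => linDeriv hb v)
    (fun v _ => by positivity) (linTendsto hb)]
  ring


/-- Explicit bounds for `K₀`:
(a) for `x ∈ (0,1]`, `K₀(x) ≥ -(ln x)/e + 1/(2e)`;
(b) for `x ≥ 1`, `K₀(x) ≥ e^{-x}/(2x)`;
(c) for `x ∈ (0,2]`, `K₀(x) ≤ -ln(x/2) + 1/e`;
(d) for `x ≥ 2`, `K₀(x) ≤ (2/x) e^{-x/2}`. -/
theorem stmt16 :
    (∀ x : ℝ, 0 < x → x ≤ 1 →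
      -(Real.log x) / Real.exp 1 + 1 / (2 * Real.exp 1) ≤ besselK0 x) ∧
    (∀ x : ℝ, 1 ≤ x → Real.exp (-x) / (2 * x) ≤ besselK0 x) ∧
    (∀ x : ℝ, 0 < x → x ≤ 2 →
      besselK0 x ≤ -(Real.log (x / 2)) + 1 / Real.exp 1) ∧
    (∀ x : ℝ, 2 ≤ x → besselK0 x ≤ (2 / x) * Real.exp (-x / 2)) := by
  refine ⟨fun x hx0 hx1 => ?_, fun x hx => ?_, fun x hx0 hx2 => ?_, fun x hx => ?_⟩
  · set v₀ := -Real.log x with hv₀def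
    have hv₀ : 0 ≤ v₀ := by
      rw [hv₀def]; simpa using Real.log_nonpos hx0.le hx1
    have hev₀ : Real.exp v₀ = x⁻¹ := by
      rw [hv₀def, Real.exp_neg, Real.exp_log hx0]
    have hb : 0 < 2 * x := by linarith
    have hf1 : IntegrableOn (fun v => Real.exp (-(x * Real.cosh v))) (Ioc 0 v₀) :=
      (besselIntegrable hx0).mono_set Ioc_subset_Ioi_self
    have hf2 : IntegrableOn (fun v => Real.exp (-(x * Real.cosh v))) (Ioi v₀) :=
      (besselIntegrable hx0).mono_set (Ioi_subset_Ioi hv₀)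
    have hsplit : besselK0 x = (∫ v in Ioc 0 v₀, Real.exp (-(x * Real.cosh v)))
        + ∫ v in Ioi v₀, Real.exp (-(x * Real.cosh v)) := by
      rw [besselK0, ← Ioc_union_Ioi_eq_Ioi hv₀,
        setIntegral_union (Ioc_disjoint_Ioi le_rfl) measurableSet_Ioi hf1 hf2]
    have hp1 : -(Real.log x) / Real.exp 1
        ≤ ∫ v in Ioc 0 v₀, Real.exp (-(x * Real.cosh v)) := by
      have : (∫ _ in Ioc 0 v₀, Real.exp (-1))
          ≤ ∫ v in Ioc 0 v₀, Real.exp (-(x * Real.cosh v)) := by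
        refine setIntegral_mono_on
          (integrableOn_const measure_Ioc_lt_top.ne) hf1 measurableSet_Ioc
          (fun v hv => ?_)
        apply Real.exp_le_exp.2
        have hc : Real.cosh v ≤ Real.exp v₀ := by
          calc Real.cosh v ≤ Real.exp v := cosh_le_exp_self (le_of_lt hv.1)
            _ ≤ Real.exp v₀ := Real.exp_le_exp.2 hv.2
        rw [hev₀] at hc
        have : x * Real.cosh v ≤ 1 := by
          calc x * Real.cosh v ≤ x * x⁻¹ := mul_le_mul_of_nonneg_left hc hx0.le
            _ = 1 := by field_simp
        linarith
      calc -(Real.log x) / Real.exp 1 = v₀ * Real.exp (-1) := by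
            rw [Real.exp_neg, div_eq_mul_inv]
        _ = ∫ _ in Ioc 0 v₀, Real.exp (-1) := by
            rw [setIntegral_const, Real.volume_real_Ioc, smul_eq_mul,
              max_eq_left (by linarith), sub_zero]
        _ ≤ _ := this
    have hp2 : 1 / (2 * Real.exp 1)
        ≤ ∫ v in Ioi v₀, Real.exp (-(x * Real.cosh v)) := by
      have heq : (∫ v in Ioi v₀, (Real.exp 1 * x) * (Real.exp v * Real.exp (-(2 * x * Real.exp v))))
          = 1 / (2 * Real.exp 1) := by
        rw [integral_const_mul, keyIntegral hb v₀, hev₀,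
          show 2 * x * x⁻¹ = 2 by field_simp, Real.exp_neg]
        rw [show Real.exp 2 = Real.exp 1 * Real.exp 1 by rw [← Real.exp_add]; norm_num]
        field_simp
      rw [← heq]
      refine setIntegral_mono_on ((keyIntegrable hb v₀).const_mul _) hf2
        measurableSet_Ioi (fun v hv => ?_)
      have hx' : 0 < x * Real.exp v := by positivity
      have h1 : (Real.exp 1 * x) * (Real.exp v * Real.exp (-(2 * x * Real.exp v)))
          = Real.exp (1 + Real.log (x * Real.exp v) + -(2 * x * Real.exp v)) := by
        rw [Real.exp_add, Real.exp_add, Real.exp_log hx']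
        ring
      rw [h1]
      apply Real.exp_le_exp.2
      have hlt := Real.log_le_sub_one_of_pos hx'
      have hc : x * Real.cosh v ≤ x * Real.exp v :=
        mul_le_mul_of_nonneg_left (cosh_le_exp_self (le_trans hv₀ (le_of_lt hv.out))) hx0.le
      have hlg : Real.log (x * Real.exp v) = Real.log x + v := by
        rw [Real.log_mul (ne_of_gt hx0) (Real.exp_ne_zero v), Real.log_exp]
      nlinarith [hlt, hc]
    linarith [hsplit, hp1, hp2]
  · have hx0 : 0 < x := by linarith
    have hb : 0 < 2 * x := by linarith
    calc Real.exp (-x) / (2 * x)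
        = ∫ v in Ioi (0:ℝ), Real.exp x * (Real.exp v * Real.exp (-(2 * x * Real.exp v))) := by
          rw [integral_const_mul, keyIntegral hb 0, Real.exp_zero, mul_one]
          rw [mul_div_assoc', ← Real.exp_add]
          ring_nf
      _ ≤ besselK0 x := by
          refine setIntegral_mono_on ((keyIntegrable hb 0).const_mul _)
            (besselIntegrable hx0) measurableSet_Ioi (fun v hv => ?_)
          rw [← Real.exp_add, ← Real.exp_add]
          apply Real.exp_le_exp.2
          have h1 := cosh_le_exp_self (le_of_lt hv.out)
          have h2 := Real.add_one_le_exp v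
          have hv0 : (0:ℝ) < v := hv.out
          nlinarith
  · set v₀ := Real.log (2 / x) with hv₀def
    have h2x : (0:ℝ) < 2 / x := by positivity
    have hv₀ : 0 ≤ v₀ := Real.log_nonneg (by rw [le_div_iff₀ hx0]; linarith)
    have hev₀ : Real.exp v₀ = 2 / x := Real.exp_log h2x
    have hlog : v₀ = -Real.log (x / 2) := by rw [hv₀def, ← Real.log_inv, inv_div]
    have hb : 0 < x / 2 := by linarith
    have hf1 : IntegrableOn (fun v => Real.exp (-(x * Real.cosh v))) (Ioc 0 v₀) :=
      (besselIntegrable hx0).mono_set Ioc_subset_Ioi_self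
    have hf2 : IntegrableOn (fun v => Real.exp (-(x * Real.cosh v))) (Ioi v₀) :=
      (besselIntegrable hx0).mono_set (Ioi_subset_Ioi hv₀)
    have hsplit : besselK0 x = (∫ v in Ioc 0 v₀, Real.exp (-(x * Real.cosh v)))
        + ∫ v in Ioi v₀, Real.exp (-(x * Real.cosh v)) := by
      rw [besselK0, ← Ioc_union_Ioi_eq_Ioi hv₀,
        setIntegral_union (Ioc_disjoint_Ioi le_rfl) measurableSet_Ioi hf1 hf2]
    have hp1 : (∫ v in Ioc 0 v₀, Real.exp (-(x * Real.cosh v))) ≤ v₀ := by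
      calc (∫ v in Ioc 0 v₀, Real.exp (-(x * Real.cosh v)))
          ≤ ∫ _ in Ioc 0 v₀, (1:ℝ) := by
            refine setIntegral_mono_on hf1
              (integrableOn_const measure_Ioc_lt_top.ne) measurableSet_Ioc
              (fun v hv => ?_)
            have := Real.cosh_pos (x := v)
            apply Real.exp_le_one_iff.2
            nlinarith
        _ = v₀ := by
            rw [setIntegral_const, Real.volume_real_Ioc, smul_eq_mul, mul_one,
              max_eq_left (by linarith)]
            ring
    have hp2 : (∫ v in Ioi v₀, Real.exp (-(x * Real.cosh v))) ≤ 1 / Real.exp 1 := by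
      have heq : (∫ v in Ioi v₀, x/2 * (Real.exp v * Real.exp (-(x/2 * Real.exp v))))
          = 1 / Real.exp 1 := by
        rw [integral_const_mul, keyIntegral hb v₀, hev₀,
          show x/2 * (2/x) = 1 by field_simp, Real.exp_neg]
        field_simp
      rw [← heq]
      refine setIntegral_mono_on hf2 ((keyIntegrable hb v₀).const_mul _)
        measurableSet_Ioi (fun v hv => ?_)
      have hev : 2 / x ≤ Real.exp v := by
        rw [← hev₀]; exact Real.exp_le_exp.2 (le_of_lt hv.out)
      have h1 : (1:ℝ) ≤ x/2 * Real.exp v := by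
        rw [show (1:ℝ) = x/2 * (2/x) by field_simp]
        exact mul_le_mul_of_nonneg_left hev hb.le
      have hc : x/2 * Real.exp v ≤ x * Real.cosh v := by
        have := mul_le_mul_of_nonneg_left (half_exp_le_cosh v) hx0.le
        linarith
      calc Real.exp (-(x * Real.cosh v)) ≤ Real.exp (-(x/2 * Real.exp v)) :=
            Real.exp_le_exp.2 (by linarith)
        _ ≤ (x/2 * Real.exp v) * Real.exp (-(x/2 * Real.exp v)) :=
            le_mul_of_one_le_left (Real.exp_pos _).le h1
        _ = x/2 * (Real.exp v * Real.exp (-(x/2 * Real.exp v))) := by ring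
    rw [← hlog]
    linarith [hsplit, hp1, hp2]
  · have hx0 : 0 < x := by linarith
    have hb : 0 < x / 2 := by linarith
    calc besselK0 x ≤ ∫ v in Ioi (0:ℝ), Real.exp (-(x/2)) * Real.exp (-(x/2 * v)) := by
          refine setIntegral_mono_on (besselIntegrable hx0)
            ((linIntegrable hb 0).const_mul _) measurableSet_Ioi (fun v hv => ?_)
          rw [← Real.exp_add]
          apply Real.exp_le_exp.2
          have h1 := half_exp_le_cosh v
          have h2 := Real.add_one_le_exp v
          nlinarith
      _ = (2 / x) * Real.exp (-x / 2) := by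
          rw [integral_const_mul, linIntegral hb 0]
          rw [mul_zero, neg_zero, Real.exp_zero]
          field_simp
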